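/- arXiv:1308.3314 — 3 statements merged into one kernel-verified Lean document; each statement's English description precedes it below -/
import Mathlib

section
/- Let d, k, n ≥ 1, let K ⊆ ℝ^d be compact, let Z_1, …, Z_n ∈ ℝ^d, and let λ > 0. Let 𝒦, η : ℝ^d → ℝ be integrable functions such that the Fourier transform 𝓕η(t) ≠ 0 for every t ∈ ℝ^d and the function t ↦ 𝓕𝒦(t)/𝓕η(t/λ) is integrable; define the deconvolution kernel 𝒦_η : ℝ^d → ℝ as the inverse Fourier transform of t ↦ 𝓕𝒦(t)/𝓕η(t/λ), and assume 𝒦_η is bounded and continuous. Define the deconvolution empirical distortion W̃_n(c) = (1/n) Σ_{i=1}^n ∫_K min_{j=1,…,k} ‖x − c_j‖² λ^{−d} 𝒦_η((Z_i − x)/λ) dx for c = (c_1,…,c_k) ∈ (ℝ^d)^k. Suppose c has pairwise distinct centers and for every j ∈ {1,…,k} and every coordinate ℓ ∈ {1,…,d}: c_{ℓ,j} · Σ_{i=1}^n ∫_{V_j(c) ∩ K} 𝒦_η((Z_i − x)/λ) dx = Σ_{i=1}^n ∫_{V_j(c) ∩ K} x_ℓ 𝒦_η((Z_i − x)/λ)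 dx, where c_{ℓ,j} is the ℓ-th coordinate of c_j. Then every directional derivative of W̃_n at c is zero, i.e. ∇W̃_n(c) = 0. -/
open MeasureTheory FourierTransform

section Aux
variable {k : ℕ} [NeZero k]

lemma aux_ciInf_le_of_forall {a b : Fin k → ℝ} {C : ℝ}
    (h : ∀ u, |a u - b u| ≤ C) : (⨅ u, a u) ≤ (⨅ u, b u) + C := by
  have : Nonempty (Fin k) := ⟨0⟩
  obtain ⟨u, hu⟩ := exists_eq_ciInf_of_finite (f := b)
  calc (⨅ u, a u) ≤ a u := ciInf_le (Finite.bddBelow_range _) u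
    _ ≤ b u + C := by have := abs_le.1 (h u); linarith
    _ = (⨅ u, b u) + C := by rw [hu]

lemma aux_abs_ciInf_sub {a b : Fin k → ℝ} {C : ℝ}
    (h : ∀ u, |a u - b u| ≤ C) : |(⨅ u, a u) - (⨅ u, b u)| ≤ C := by
  rw [abs_sub_le_iff]
  have h' : ∀ u, |b u - a u| ≤ C := fun u => by rw [abs_sub_comm]; exact h u
  exact ⟨by linarith [aux_ciInf_le_of_forall h], by linarith [aux_ciInf_le_of_forall h']⟩

lemma aux_ciInf_eq {a : Fin k → ℝ} {j : Fin k} (h : ∀ u, a j ≤ a u) :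
    (⨅ u, a u) = a j := by
  have : Nonempty (Fin k) := ⟨0⟩
  exact le_antisymm (ciInf_le (Finite.bddBelow_range _) j) (le_ciInf h)

lemma aux_expand {d : ℕ} (a b : EuclideanSpace ℝ (Fin d)) (h : ℝ) :
    ‖a - h • b‖ ^ 2 = ‖a‖ ^ 2 - 2 * (h * (inner ℝ a b : ℝ)) + h ^ 2 * ‖b‖ ^ 2 := by
  rw [norm_sub_sq_real, real_inner_smul_right, norm_smul]
  simp [mul_pow, sq_abs]

lemma aux_pointwise {d : ℕ}
    (c c' : Fin k → EuclideanSpace ℝ (Fin d)) (x : EuclideanSpace ℝ (Fin d)) (j : Fin k)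
    (hj : ∀ u, u ≠ j → ‖x - c j‖ < ‖x - c u‖) :
    Filter.Tendsto
      (fun h : ℝ => ((⨅ u, ‖x - (c + h • c') u‖ ^ 2) - ⨅ u, ‖x - c u‖ ^ 2) / h)
      (nhdsWithin 0 {0}ᶜ)
      (nhds (-2 * (inner ℝ (x - c j) (c' j) : ℝ))) := by
  have : Nonempty (Fin k) := ⟨0⟩
  have hsq : ∀ u, u ≠ j → ‖x - c j‖ ^ 2 < ‖x - c u‖ ^ 2 := fun u hu => by
    have h1 := hj u hu
    nlinarith [norm_nonneg (x - c j), norm_nonneg (x - c u)]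
  have hm0 : (⨅ u, ‖x - c u‖ ^ 2) = ‖x - c j‖ ^ 2 := by
    refine aux_ciInf_eq fun u => ?_
    rcases eq_or_ne u j with rfl | hu
    · exact le_refl _
    · exact (hsq u hu).le
  have hcont : ∀ u : Fin k, Continuous fun h : ℝ => ‖x - (c u + h • c' u)‖ ^ 2 := by
    intro u; fun_prop
  have H : ∀ u : Fin k, ∀ᶠ h : ℝ in nhds 0,
      u ≠ j → ‖x - (c j + h • c' j)‖ ^ 2 < ‖x - (c u + h • c' u)‖ ^ 2 := by
    intro u
    rcases eq_or_ne u j with rfl | hu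
    · exact Filter.Eventually.of_forall fun h h' => absurd rfl h'
    · have h0 : ‖x - (c j + (0:ℝ) • c' j)‖ ^ 2 < ‖x - (c u + (0:ℝ) • c' u)‖ ^ 2 := by
        simpa using hsq u hu
      have := ((hcont j).tendsto 0).eventually_lt ((hcont u).tendsto 0) h0
      filter_upwards [this] with h hh _ using hh
  have hev : ∀ᶠ h : ℝ in nhds 0,
      (⨅ u, ‖x - (c + h • c') u‖ ^ 2) = ‖x - (c j + h • c' j)‖ ^ 2 := by
    filter_upwards [Filter.eventually_all.2 H] with h hh
    have : (⨅ u, ‖x - (c + h • c') u‖ ^ 2)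
        = ‖x - ((c + h • c') j)‖ ^ 2 := by
      refine aux_ciInf_eq fun u => ?_
      rcases eq_or_ne u j with rfl | hu
      · exact le_refl _
      · simpa [Pi.add_apply, Pi.smul_apply] using (hh u hu).le
    simpa [Pi.add_apply, Pi.smul_apply] using this
  have key : ∀ h : ℝ, h ≠ 0 → (‖x - (c j + h • c' j)‖ ^ 2 - ‖x - c j‖ ^ 2) / h
      = -2 * (inner ℝ (x - c j) (c' j) : ℝ) + h * ‖c' j‖ ^ 2 := by
    intro h hh
    rw [sub_add_eq_sub_sub, aux_expand]
    field_simp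
    ring
  have hT : Filter.Tendsto (fun h : ℝ => -2 * (inner ℝ (x - c j) (c' j) : ℝ) + h * ‖c' j‖ ^ 2)
      (nhdsWithin 0 {0}ᶜ) (nhds (-2 * (inner ℝ (x - c j) (c' j) : ℝ))) := by
    have : Filter.Tendsto (fun h : ℝ => -2 * (inner ℝ (x - c j) (c' j) : ℝ) + h * ‖c' j‖ ^ 2)
        (nhds 0) (nhds (-2 * (inner ℝ (x - c j) (c' j) : ℝ) + 0 * ‖c' j‖ ^ 2)) :=
      (continuous_const.add (continuous_id.mul continuous_const)).tendsto 0
    simpa using this.mono_left nhdsWithin_le_nhds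
  refine hT.congr' ?_
  filter_upwards [hev.filter_mono nhdsWithin_le_nhds, self_mem_nhdsWithin] with h h1 h2
  rw [hm0, h1, key h h2]

end Aux


/-- The Voronoi cell of index `j` for the codebook `c`. -/
def voronoiCell {d k : ℕ} (c : Fin k → EuclideanSpace ℝ (Fin d)) (j : Fin k) :
    Set (EuclideanSpace ℝ (Fin d)) :=
  {x | ∀ u : Fin k, ‖x - c j‖ ≤ ‖x - c u‖}

set_option maxHeartbeats 1000000 in
/-- First-order conditions for the deconvolution empirical distortion of
noisy `k`-means: if the codebook `c` (with pairwise distinct centers) satisfies, on every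
Voronoi cell and in every coordinate, the deconvolution centroid conditions, then every
directional derivative of the deconvolution empirical distortion
`W̃_n(c) = (1/n) Σ_i ∫_K min_j ‖x − c_j‖² λ^{−d} 𝒦_η((Z_i − x)/λ) dx` at `c` vanishes. -/
theorem noisy_kmeans_first_order_conditions
    (d k n : ℕ) (hd : 1 ≤ d) (hk : 1 ≤ k) (hn : 1 ≤ n)
    (K : Set (EuclideanSpace ℝ (Fin d))) (hK : IsCompact K)
    (Z : Fin n → EuclideanSpace ℝ (Fin d))
    (lam : ℝ) (hlam : 0 < lam)
    (Kker η : EuclideanSpace ℝ (Fin d) → ℝ)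
    (hKker_int : Integrable Kker) (hη_int : Integrable η)
    (hη_ne : ∀ t, 𝓕 (fun x => (η x : ℂ)) t ≠ 0)
    (hratio_int : Integrable (fun t =>
      𝓕 (fun x => (Kker x : ℂ)) t / 𝓕 (fun x => (η x : ℂ)) (lam⁻¹ • t)))
    (Kη : EuclideanSpace ℝ (Fin d) → ℝ)
    (hKη : ∀ x : EuclideanSpace ℝ (Fin d), (Kη x : ℂ) =
      𝓕⁻ (fun t => 𝓕 (fun y => (Kker y : ℂ)) t / 𝓕 (fun y => (η y : ℂ)) (lam⁻¹ • t)) x)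
    (hKη_bdd : ∃ M : ℝ, ∀ x, |Kη x| ≤ M) (hKη_cont : Continuous Kη)
    (W : (Fin k → EuclideanSpace ℝ (Fin d)) → ℝ)
    (hW : W = fun c => (1 / (n : ℝ)) * ∑ i : Fin n,
      ∫ x in K, (⨅ j : Fin k, ‖x - c j‖ ^ 2) * ((lam ^ d)⁻¹ * Kη (lam⁻¹ • (Z i - x))))
    (c : Fin k → EuclideanSpace ℝ (Fin d))
    (hc : Function.Injective c)
    (hfoc : ∀ (j : Fin k) (ℓ : Fin d),
      c j ℓ * ∑ i : Fin n, ∫ x in voronoiCell c j ∩ K, Kη (lam⁻¹ • (Z i - x)) =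
        ∑ i : Fin n, ∫ x in voronoiCell c j ∩ K, x ℓ * Kη (lam⁻¹ • (Z i - x))) :
    ∀ c' : Fin k → EuclideanSpace ℝ (Fin d),
      Filter.Tendsto (fun h : ℝ => (W (c + h • c') - W c) / h)
        (nhdsWithin 0 {0}ᶜ) (nhds 0) := by
  intro c'
  haveI : NeZero k := ⟨by omega⟩
  haveI : Nonempty (Fin k) := ⟨0⟩
  obtain ⟨M, hM⟩ := hKη_bdd
  -- continuity facts
  have hgc : ∀ i : Fin n, Continuous fun x : EuclideanSpace ℝ (Fin d) =>
      (lam ^ d)⁻¹ * Kη (lam⁻¹ • (Z i - x)) := fun i =>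
    continuous_const.mul (hKη_cont.comp (by fun_prop))
  have hKηc : ∀ i : Fin n, Continuous fun x : EuclideanSpace ℝ (Fin d) =>
      Kη (lam⁻¹ • (Z i - x)) := fun i =>
    hKη_cont.comp (by fun_prop)
  have hmc : ∀ b : Fin k → EuclideanSpace ℝ (Fin d),
      Continuous fun x : EuclideanSpace ℝ (Fin d) => ⨅ j, ‖x - b j‖ ^ 2 := by
    intro b
    have h := Continuous.finset_inf'_apply (s := (Finset.univ : Finset (Fin k)))
      (f := fun j (x : EuclideanSpace ℝ (Fin d)) => ‖x - b j‖ ^ 2) Finset.univ_nonempty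
      (fun j _ => by fun_prop)
    convert h using 2 with x
    rw [← Finset.inf'_univ_eq_ciInf]
  have hprojc : ∀ ℓ : Fin d, Continuous fun x : EuclideanSpace ℝ (Fin d) => x ℓ :=
    fun ℓ => (EuclideanSpace.proj (𝕜 := ℝ) ℓ).continuous
  -- integrability on K
  have hIntK : ∀ (b : Fin k → EuclideanSpace ℝ (Fin d)) (i : Fin n),
      IntegrableOn (fun x => (⨅ j, ‖x - b j‖ ^ 2) * ((lam ^ d)⁻¹ * Kη (lam⁻¹ • (Z i - x)))) K :=
    fun b i => ((hmc b).mul (hgc i)).continuousOn.integrableOn_compact hK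
  -- the bad set
  set B : Set (EuclideanSpace ℝ (Fin d)) :=
    ⋃ p : Fin k × Fin k, {x | p.1 ≠ p.2 ∧ ‖x - c p.1‖ = ‖x - c p.2‖} with hBdef
  have hB : volume B = 0 := by
    refine measure_iUnion_null fun p => ?_
    rcases eq_or_ne p.1 p.2 with hp | hp
    · have : {x : EuclideanSpace ℝ (Fin d) | p.1 ≠ p.2 ∧ ‖x - c p.1‖ = ‖x - c p.2‖} = ∅ := by
        ext x; simp [hp]
      rw [this]; simp
    · have hsub : {x : EuclideanSpace ℝ (Fin d) | p.1 ≠ p.2 ∧ ‖x - c p.1‖ = ‖x - c p.2‖}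
          ⊆ (AffineSubspace.perpBisector (c p.1) (c p.2) : Set (EuclideanSpace ℝ (Fin d))) := by
        intro x hx
        have hx' : p.1 ≠ p.2 ∧ ‖x - c p.1‖ = ‖x - c p.2‖ := hx
        have hd' : dist x (c p.1) = dist x (c p.2) := by
          simpa [dist_eq_norm] using hx'.2
        exact AffineSubspace.mem_perpBisector_iff_dist_eq.2 hd'
      refine measure_mono_null hsub ?_
      exact Measure.addHaar_affineSubspace _ _ (by simpa using fun h => hp (hc h))
  have hBae : ∀ᵐ x : EuclideanSpace ℝ (Fin d) ∂volume, x ∉ B := by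
    have : {a : EuclideanSpace ℝ (Fin d) | ¬ a ∉ B} = B := by ext a; simp
    rw [ae_iff, this]; exact hB
  -- the strict Voronoi cells
  set S : Fin k → Set (EuclideanSpace ℝ (Fin d)) :=
    fun j => {x | ∀ u, u ≠ j → ‖x - c j‖ < ‖x - c u‖} with hSdef
  have hSopen : ∀ j, IsOpen (S j) := by
    intro j
    have : S j = ⋂ u, {x : EuclideanSpace ℝ (Fin d) | u ≠ j → ‖x - c j‖ < ‖x - c u‖} := by
      ext x; simp [hSdef, Set.mem_iInter]
    rw [this]
    refine isOpen_iInter_of_finite fun u => ?_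
    rcases eq_or_ne u j with rfl | hu
    · simp
    · have : {x : EuclideanSpace ℝ (Fin d) | u ≠ j → ‖x - c j‖ < ‖x - c u‖}
          = {x | ‖x - c j‖ < ‖x - c u‖} := by ext x; simp [hu]
      rw [this]; exact isOpen_lt (by fun_prop) (by fun_prop)
  have hSmeas : ∀ j, MeasurableSet (S j) := fun j => (hSopen j).measurableSet
  have hxS : ∀ x, x ∉ B → ∃ j, x ∈ S j := by
    intro x hx
    obtain ⟨j, hj⟩ := Finite.exists_min fun u => ‖x - c u‖
    refine ⟨j, fun u hu => ?_⟩
    rcases lt_or_eq_of_le (hj u) with hlt | heq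
    · exact hlt
    · have hmem : x ∈ {y : EuclideanSpace ℝ (Fin d) |
          ((j, u) : Fin k × Fin k).1 ≠ ((j, u) : Fin k × Fin k).2 ∧
          ‖y - c ((j, u) : Fin k × Fin k).1‖ = ‖y - c ((j, u) : Fin k × Fin k).2‖} :=
        ⟨Ne.symm hu, heq⟩
      exact absurd (Set.mem_iUnion.2 ⟨(j, u), hmem⟩) hx
  have hSsubV : ∀ j, S j ⊆ voronoiCell c j := by
    intro j x hx u
    rcases eq_or_ne u j with rfl | hu
    · exact le_refl _
    · exact (hx u hu).le
  have hSae : ∀ j, (S j ∩ K : Set (EuclideanSpace ℝ (Fin d))) =ᵐ[volume]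
      (voronoiCell c j ∩ K : Set (EuclideanSpace ℝ (Fin d))) := by
    intro j
    refine MeasureTheory.ae_eq_set.2 ⟨?_, ?_⟩
    · refine measure_mono_null (fun x hx => ?_) hB
      exact absurd ⟨hSsubV j hx.1.1, hx.1.2⟩ hx.2
    · refine measure_mono_null (fun x hx => ?_) hB
      obtain ⟨⟨hxV, hxK⟩, hxn⟩ := hx
      have : ¬ (∀ u, u ≠ j → ‖x - c j‖ < ‖x - c u‖) := fun hcon => hxn ⟨hcon, hxK⟩
      simp only [not_forall] at this
      obtain ⟨u, hu, hge⟩ := this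
      have hmem : x ∈ {y : EuclideanSpace ℝ (Fin d) |
          ((j, u) : Fin k × Fin k).1 ≠ ((j, u) : Fin k × Fin k).2 ∧
          ‖y - c ((j, u) : Fin k × Fin k).1‖ = ‖y - c ((j, u) : Fin k × Fin k).2‖} :=
        ⟨Ne.symm hu, le_antisymm (hxV u) (not_lt.1 hge)⟩
      exact Set.mem_iUnion.2 ⟨(j, u), hmem⟩
  -- the a.e. derivative
  set D : EuclideanSpace ℝ (Fin d) → ℝ :=
    fun x => ∑ j, Set.indicator (S j)
      (fun y => -2 * (inner ℝ (y - c j) (c' j) : ℝ)) x with hDdef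
  have hDeval : ∀ j, ∀ x ∈ S j, D x = -2 * (inner ℝ (x - c j) (c' j) : ℝ) := by
    intro j x hx
    rw [hDdef]
    refine (Finset.sum_eq_single j (fun u _ hu => ?_)
      (fun h => absurd (Finset.mem_univ j) h)).trans (Set.indicator_of_mem hx _)
    refine Set.indicator_of_notMem (fun hxu => ?_) _
    exact absurd (hxu j (Ne.symm hu)) (asymm (hx u hu))
  -- the algebraic rearrangement of the difference quotient
  have quot_eq : ∀ h : ℝ, (W (c + h • c') - W c) / h
      = (1 / (n : ℝ)) * ∑ i : Fin n, ∫ x in K,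
          (((⨅ j, ‖x - (c + h • c') j‖ ^ 2) - ⨅ j, ‖x - c j‖ ^ 2)
            * ((lam ^ d)⁻¹ * Kη (lam⁻¹ • (Z i - x)))) / h := by
    intro h
    rw [hW]
    simp only
    rw [← mul_sub, ← Finset.sum_sub_distrib, mul_div_assoc, Finset.sum_div]
    congr 1
    refine Finset.sum_congr rfl fun i _ => ?_
    rw [← integral_sub (hIntK _ i) (hIntK c i), ← integral_div]
    refine integral_congr_ae (Filter.Eventually.of_forall fun x => ?_)
    ring
  -- dominated convergence for each i
  have key : ∀ i : Fin n, Filter.Tendsto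
      (fun h : ℝ => ∫ x in K,
        (((⨅ j, ‖x - (c + h • c') j‖ ^ 2) - ⨅ j, ‖x - c j‖ ^ 2)
          * ((lam ^ d)⁻¹ * Kη (lam⁻¹ • (Z i - x)))) / h)
      (nhdsWithin 0 {0}ᶜ)
      (nhds (∫ x in K, D x * ((lam ^ d)⁻¹ * Kη (lam⁻¹ • (Z i - x))))) := by
    intro i
    obtain ⟨R₀, hR₀⟩ := hK.isBounded.exists_norm_le
    set R : ℝ := max R₀ 0 with hRdef
    have hR : ∀ x ∈ K, ‖x‖ ≤ R := fun x hx => (hR₀ x hx).trans (le_max_left _ _)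
    have hR0 : 0 ≤ R := le_max_right _ _
    obtain ⟨Cc, hCc⟩ := Finite.exists_le fun u => ‖c u‖
    obtain ⟨Cc', hCc'⟩ := Finite.exists_le fun u => ‖c' u‖
    have hCc0 : 0 ≤ Cc := (norm_nonneg _).trans (hCc 0)
    have hCc'0 : 0 ≤ Cc' := (norm_nonneg _).trans (hCc' 0)
    have hM0 : 0 ≤ M := (abs_nonneg _).trans (hM 0)
    set L : ℝ := 2 * (R + Cc) * Cc' + Cc' ^ 2 with hLdef
    set G : ℝ := |(lam ^ d)⁻¹| * M with hGdef
    have hL0 : 0 ≤ L := by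
      rw [hLdef]
      have h1 := mul_nonneg (mul_nonneg zero_le_two (add_nonneg hR0 hCc0)) hCc'0
      have h2 := sq_nonneg Cc'
      linarith
    have hG0 : 0 ≤ G := mul_nonneg (abs_nonneg _) hM0
    apply MeasureTheory.tendsto_integral_filter_of_dominated_convergence
      (bound := fun _ => L * G)
    · exact Filter.Eventually.of_forall fun h =>
        ((((hmc _).sub (hmc c)).mul (hgc i)).div_const h).aestronglyMeasurable
    · have h1 : ∀ᶠ h : ℝ in nhdsWithin (0:ℝ) {0}ᶜ, |h| ≤ 1 := by
        have : ∀ᶠ h : ℝ in nhds (0:ℝ), |h| ≤ 1 := by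
          filter_upwards [Metric.ball_mem_nhds (0:ℝ) one_pos] with h hh
          rw [Metric.mem_ball, Real.dist_eq, sub_zero] at hh
          exact hh.le
        exact this.filter_mono nhdsWithin_le_nhds
      filter_upwards [h1, self_mem_nhdsWithin] with h hh1 hh0
      have hhne : h ≠ 0 := hh0
      refine (ae_restrict_iff' hK.isClosed.measurableSet).2
        (Filter.Eventually.of_forall fun x hx => ?_)
      have hdiff : |(⨅ j, ‖x - (c + h • c') j‖ ^ 2) - ⨅ j, ‖x - c j‖ ^ 2| ≤ |h| * L := by
        refine aux_abs_ciInf_sub fun u => ?_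
        have e1 : ‖x - (c + h • c') u‖ ^ 2
            = ‖x - c u‖ ^ 2 - 2 * (h * (inner ℝ (x - c u) (c' u) : ℝ)) + h ^ 2 * ‖c' u‖ ^ 2 := by
          have e0 : x - (c + h • c') u = (x - c u) - h • c' u := by
            simp only [Pi.add_apply, Pi.smul_apply]
            rw [sub_add_eq_sub_sub]
          rw [e0, aux_expand]
        rw [e1]
        have hip : |(inner ℝ (x - c u) (c' u) : ℝ)| ≤ (R + Cc) * Cc' := by
          refine (abs_real_inner_le_norm _ _).trans ?_
          have h2 : ‖x - c u‖ ≤ R + Cc :=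
            (norm_sub_le _ _).trans (add_le_add (hR x hx) (hCc u))
          exact mul_le_mul h2 (hCc' u) (norm_nonneg _) (by linarith)
        have hnc' : ‖c' u‖ ≤ Cc' := hCc' u
        have e2 : ‖x - c u‖ ^ 2 - 2 * (h * (inner ℝ (x - c u) (c' u) : ℝ)) + h ^ 2 * ‖c' u‖ ^ 2
            - ‖x - c u‖ ^ 2
            = h * (-2 * (inner ℝ (x - c u) (c' u) : ℝ) + h * ‖c' u‖ ^ 2) := by ring
        rw [e2, abs_mul]
        refine mul_le_mul_of_nonneg_left ?_ (abs_nonneg h)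
        have hnc2 : ‖c' u‖ ^ 2 ≤ Cc' ^ 2 := by nlinarith [norm_nonneg (c' u)]
        have hip' := abs_le.1 hip
        have hh' := abs_le.1 hh1
        rw [hLdef]
        have step1 : |(-2 : ℝ) * (inner ℝ (x - c u) (c' u) : ℝ) + h * ‖c' u‖ ^ 2|
            ≤ 2 * |(inner ℝ (x - c u) (c' u) : ℝ)| + |h| * ‖c' u‖ ^ 2 := by
          refine (abs_add_le _ _).trans ?_
          rw [abs_mul, abs_mul, abs_neg]
          simp [abs_of_nonneg (sq_nonneg (‖c' u‖))]
        refine step1.trans ?_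
        have step2 : |h| * ‖c' u‖ ^ 2 ≤ 1 * Cc' ^ 2 :=
          mul_le_mul hh1 hnc2 (sq_nonneg _) zero_le_one
        linarith
      have hgb : |(lam ^ d)⁻¹ * Kη (lam⁻¹ • (Z i - x))| ≤ G := by
        rw [hGdef, abs_mul]
        exact mul_le_mul_of_nonneg_left (hM _) (abs_nonneg _)
      have hhpos : 0 < |h| := abs_pos.2 hhne
      rw [Real.norm_eq_abs, abs_div, abs_mul, div_le_iff₀ hhpos]
      calc |(⨅ j, ‖x - (c + h • c') j‖ ^ 2) - ⨅ j, ‖x - c j‖ ^ 2|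
            * |(lam ^ d)⁻¹ * Kη (lam⁻¹ • (Z i - x))|
          ≤ (|h| * L) * G :=
            mul_le_mul hdiff hgb (abs_nonneg _) (mul_nonneg (abs_nonneg h) hL0)
        _ = L * G * |h| := by ring
    · exact integrableOn_const hK.measure_lt_top.ne
    · refine ae_restrict_of_ae ?_
      filter_upwards [hBae] with x hx
      obtain ⟨j, hj⟩ := hxS x hx
      have hj' : ∀ u, u ≠ j → ‖x - c j‖ < ‖x - c u‖ := hj
      have hT := (aux_pointwise c c' x j hj').mul_const
        ((lam ^ d)⁻¹ * Kη (lam⁻¹ • (Z i - x)))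
      rw [hDeval j x hj]
      refine hT.congr fun h => ?_
      rw [div_mul_eq_mul_div]
  -- the limit value is zero
  have hIntV : ∀ (j : Fin k), IsCompact (voronoiCell c j ∩ K) := by
    intro j
    have hcl : IsClosed (voronoiCell c j) := by
      have : voronoiCell c j = ⋂ u, {x : EuclideanSpace ℝ (Fin d) | ‖x - c j‖ ≤ ‖x - c u‖} := by
        ext x; simp [voronoiCell, Set.mem_iInter]
      rw [this]
      exact isClosed_iInter fun u => isClosed_le (by fun_prop) (by fun_prop)
    exact hK.inter_left hcl
  have hzero : ∑ i : Fin n, ∫ x in K, D x * ((lam ^ d)⁻¹ * Kη (lam⁻¹ • (Z i - x))) = 0 := by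
    -- split over Voronoi cells
    have hsplit : ∀ i : Fin n, ∫ x in K, D x * ((lam ^ d)⁻¹ * Kη (lam⁻¹ • (Z i - x)))
        = ∑ j, ∫ x in voronoiCell c j ∩ K,
            (-2 * (inner ℝ (x - c j) (c' j) : ℝ)) * ((lam ^ d)⁻¹ * Kη (lam⁻¹ • (Z i - x))) := by
      intro i
      have e1 : ∀ x, D x * ((lam ^ d)⁻¹ * Kη (lam⁻¹ • (Z i - x)))
          = ∑ j, Set.indicator (S j)
              (fun y => (-2 * (inner ℝ (y - c j) (c' j) : ℝ))
                * ((lam ^ d)⁻¹ * Kη (lam⁻¹ • (Z i - y)))) x := by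
        intro x
        rw [hDdef, Finset.sum_mul]
        refine Finset.sum_congr rfl fun j _ => ?_
        by_cases hx : x ∈ S j
        · simp [Set.indicator_of_mem hx]
        · simp [Set.indicator_of_notMem hx]
      rw [integral_congr_ae (Filter.Eventually.of_forall e1), integral_finset_sum]
      · refine Finset.sum_congr rfl fun j _ => ?_
        rw [integral_indicator (hSmeas j), Measure.restrict_restrict (hSmeas j)]
        exact setIntegral_congr_set (hSae j)
      · intro j _
        refine Integrable.indicator ?_ (hSmeas j)
        exact ((continuous_const.mul ((continuous_id.sub continuous_const).inner
          continuous_const)).mul (hgc i)).continuousOn.integrableOn_compact hK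
    -- per-cell first-order condition
    have hcell : ∀ j : Fin k, ∑ i : Fin n, ∫ x in voronoiCell c j ∩ K,
        (inner ℝ (x - c j) (c' j) : ℝ) * Kη (lam⁻¹ • (Z i - x)) = 0 := by
      intro j
      have hIx : ∀ i, IntegrableOn (fun x : EuclideanSpace ℝ (Fin d) =>
          Kη (lam⁻¹ • (Z i - x))) (voronoiCell c j ∩ K) :=
        fun i => (hKηc i).continuousOn.integrableOn_compact (hIntV j)
      have hIxl : ∀ i (ℓ : Fin d), IntegrableOn (fun x : EuclideanSpace ℝ (Fin d) =>
          x ℓ * Kη (lam⁻¹ • (Z i - x))) (voronoiCell c j ∩ K) :=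
        fun i ℓ => ((hprojc ℓ).mul (hKηc i)).continuousOn.integrableOn_compact (hIntV j)
      have hint : ∀ i, ∫ x in voronoiCell c j ∩ K,
          (inner ℝ (x - c j) (c' j) : ℝ) * Kη (lam⁻¹ • (Z i - x))
          = ∑ ℓ, c' j ℓ * ((∫ x in voronoiCell c j ∩ K, x ℓ * Kη (lam⁻¹ • (Z i - x)))
              - c j ℓ * ∫ x in voronoiCell c j ∩ K, Kη (lam⁻¹ • (Z i - x))) := by
        intro i
        have e : ∀ x : EuclideanSpace ℝ (Fin d),
            (inner ℝ (x - c j) (c' j) : ℝ) * Kη (lam⁻¹ • (Z i - x))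
            = ∑ ℓ, c' j ℓ * (x ℓ * Kη (lam⁻¹ • (Z i - x))
                - c j ℓ * Kη (lam⁻¹ • (Z i - x))) := by
          intro x
          simp only [PiLp.inner_apply, RCLike.inner_apply, starRingEnd_apply, star_trivial]
          rw [Finset.sum_mul]
          refine Finset.sum_congr rfl fun ℓ _ => ?_
          have hsub : (x - c j) ℓ = x ℓ - c j ℓ := rfl
          rw [hsub]; ring
        rw [integral_congr_ae (Filter.Eventually.of_forall e), integral_finset_sum]
        · refine Finset.sum_congr rfl fun ℓ _ => ?_
          rw [integral_const_mul, integral_sub (hIxl i ℓ) ((hIx i).const_mul _),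
            integral_const_mul]
        · intro ℓ _
          exact (((hIxl i ℓ).sub ((hIx i).const_mul _)).const_mul _)
      rw [Finset.sum_congr rfl fun i _ => hint i, Finset.sum_comm]
      refine Finset.sum_eq_zero fun ℓ _ => ?_
      rw [← Finset.mul_sum, Finset.sum_sub_distrib, ← Finset.mul_sum, ← hfoc j ℓ,
        sub_self, mul_zero]
    -- combine
    calc ∑ i : Fin n, ∫ x in K, D x * ((lam ^ d)⁻¹ * Kη (lam⁻¹ • (Z i - x)))
        = ∑ i : Fin n, ∑ j, ∫ x in voronoiCell c j ∩ K,
            (-2 * (inner ℝ (x - c j) (c' j) : ℝ)) * ((lam ^ d)⁻¹ * Kη (lam⁻¹ • (Z i - x))) :=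
          Finset.sum_congr rfl fun i _ => hsplit i
      _ = ∑ j, ∑ i : Fin n, ∫ x in voronoiCell c j ∩ K,
            (-2 * (inner ℝ (x - c j) (c' j) : ℝ)) * ((lam ^ d)⁻¹ * Kη (lam⁻¹ • (Z i - x))) :=
          Finset.sum_comm
      _ = ∑ j, (-2 * (lam ^ d)⁻¹) * ∑ i : Fin n, ∫ x in voronoiCell c j ∩ K,
            (inner ℝ (x - c j) (c' j) : ℝ) * Kη (lam⁻¹ • (Z i - x)) := by
          refine Finset.sum_congr rfl fun j _ => ?_
          rw [Finset.mul_sum]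
          refine Finset.sum_congr rfl fun i _ => ?_
          rw [← integral_const_mul]
          refine integral_congr_ae (Filter.Eventually.of_forall fun x => ?_)
          ring
      _ = 0 := Finset.sum_eq_zero fun j _ => by rw [hcell j, mul_zero]
  -- conclude
  have main : Filter.Tendsto
      (fun h : ℝ => (1 / (n : ℝ)) * ∑ i : Fin n, ∫ x in K,
        (((⨅ j, ‖x - (c + h • c') j‖ ^ 2) - ⨅ j, ‖x - c j‖ ^ 2)
          * ((lam ^ d)⁻¹ * Kη (lam⁻¹ • (Z i - x)))) / h)
      (nhdsWithin 0 {0}ᶜ)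
      (nhds ((1 / (n : ℝ)) * ∑ i : Fin n,
        ∫ x in K, D x * ((lam ^ d)⁻¹ * Kη (lam⁻¹ • (Z i - x))))) :=
    (tendsto_finset_sum Finset.univ fun i _ => key i).const_mul _
  have h0 : (1 / (n : ℝ)) * ∑ i : Fin n,
      ∫ x in K, D x * ((lam ^ d)⁻¹ * Kη (lam⁻¹ • (Z i - x))) = 0 := by
    rw [hzero, mul_zero]
  rw [h0] at main
  exact main.congr fun h => (quot_eq h).symm
end

section
/- Let d, k ≥ 1, let K ⊆ ℝ^d be compact, and let g : ℝ^d → ℝ be bounded and measurable. Define W_g(c) = ∫_K min_{j=1,…,k} ‖x − c_j‖² g(x) dx for c = (c_1,…,c_k) ∈ (ℝ^d)^k. Suppose c has pairwise distinct centers and for every j ∈ {1,…,k} and every coordinate ℓ ∈ {1,…,d}: c_{ℓ,j} · ∫_{V_j(c) ∩ K} g(x) dx = ∫_{V_j(c) ∩ K} x_ℓ g(x) dx, where c_{ℓ,j} is the ℓ-th coordinate of c_j. Then every directional derivative of W_g at c is zero. -/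
open MeasureTheory

open Filter Topology Set

/-- A bisector hyperplane in Euclidean space is a null set. -/
lemma aux_bisector_null {d : ℕ} (a b : EuclideanSpace ℝ (Fin d)) (hab : a ≠ b) :
    volume {x : EuclideanSpace ℝ (Fin d) | ‖x - a‖ = ‖x - b‖} = 0 := by
  have : {x : EuclideanSpace ℝ (Fin d) | ‖x - a‖ = ‖x - b‖}
      = (AffineSubspace.perpBisector a b : Set (EuclideanSpace ℝ (Fin d))) := by
    ext x
    simp [AffineSubspace.mem_perpBisector_iff_dist_eq, dist_eq_norm]
  rw [this]
  exact Measure.addHaar_affineSubspace _ _ (by simpa using hab)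

lemma aux_ciInf_le {k : ℕ} [Nonempty (Fin k)] (q : Fin k → ℝ) (j : Fin k) :
    (⨅ u, q u) ≤ q j :=
  ciInf_le (Set.finite_range q).bddBelow j

lemma aux_iInf_eq {k : ℕ} [Nonempty (Fin k)] (q : Fin k → ℝ) (j₀ : Fin k)
    (h : ∀ u, q j₀ ≤ q u) : (⨅ u, q u) = q j₀ :=
  le_antisymm (aux_ciInf_le q j₀) (le_ciInf h)

lemma aux_abs_iInf_sub {k : ℕ} [Nonempty (Fin k)] (p q : Fin k → ℝ) (B : ℝ)
    (h : ∀ j, |q j - p j| ≤ B) : |(⨅ j, q j) - ⨅ j, p j| ≤ B := by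
  have key : ∀ p q : Fin k → ℝ, (∀ j, |q j - p j| ≤ B) →
      (⨅ j, q j) - (⨅ j, p j) ≤ B := by
    intro p q h
    obtain ⟨j₀, -, hj₀⟩ := Finset.exists_min_image Finset.univ p
      ⟨Classical.arbitrary _, Finset.mem_univ _⟩
    have h1 : (⨅ j, p j) = p j₀ := aux_iInf_eq p j₀ fun u => hj₀ u (Finset.mem_univ u)
    have h2 : (⨅ j, q j) ≤ q j₀ := aux_ciInf_le q j₀
    have h3 := abs_le.mp (h j₀)
    linarith [h3.2]
  rw [abs_le]
  constructor
  · have := key q p fun j => by rw [abs_sub_comm]; exact h j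
    linarith
  · exact key p q h

lemma aux_integrableOn {d : ℕ} {s : Set (EuclideanSpace ℝ (Fin d))} (hs : MeasurableSet s)
    (hμ : volume s < ⊤) {f : EuclideanSpace ℝ (Fin d) → ℝ} (hf : Measurable f) {C : ℝ}
    (hC : ∀ x ∈ s, |f x| ≤ C) : IntegrableOn f s := by
  refine Integrable.mono' (g := fun _ => C) (integrableOn_const hμ.ne) hf.aestronglyMeasurable ?_
  rw [ae_restrict_iff' hs]
  exact ae_of_all _ fun x hx => by simpa using hC x hx

set_option maxHeartbeats 2000000 in
/-- If `g` is bounded and measurable on a compact `K ⊆ ℝ^d`, the codebook `c`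
has pairwise distinct centers and satisfies the first-order (centroid) conditions on each
Voronoi cell, then every directional derivative of the weighted distortion
`W_g(c) = ∫_K min_j ‖x − c_j‖² g(x) dx` at `c` is zero. -/
theorem directional_derivatives_vanish_of_first_order_conditions
    (d k : ℕ) (hd : 1 ≤ d) (hk : 1 ≤ k)
    (K : Set (EuclideanSpace ℝ (Fin d))) (hK : IsCompact K)
    (g : EuclideanSpace ℝ (Fin d) → ℝ)
    (hg_bdd : ∃ M : ℝ, ∀ x, |g x| ≤ M) (hg_meas : Measurable g)
    (W : (Fin k → EuclideanSpace ℝ (Fin d)) → ℝ)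
    (hW : W = fun c => ∫ x in K, (⨅ j : Fin k, ‖x - c j‖ ^ 2) * g x)
    (c : Fin k → EuclideanSpace ℝ (Fin d))
    (hc : Function.Injective c)
    (hfoc : ∀ (j : Fin k) (ℓ : Fin d),
      c j ℓ * ∫ x in voronoiCell c j ∩ K, g x =
        ∫ x in voronoiCell c j ∩ K, x ℓ * g x) :
    ∀ c' : Fin k → EuclideanSpace ℝ (Fin d),
      Filter.Tendsto (fun h : ℝ => (W (c + h • c') - W c) / h)
        (nhdsWithin 0 {0}ᶜ) (nhds 0) := by
  classical
  intro c'
  haveI hne : Nonempty (Fin k) := ⟨⟨0, hk⟩⟩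
  obtain ⟨M, hM⟩ := hg_bdd
  have hM0 : 0 ≤ M := le_trans (abs_nonneg _) (hM 0)
  obtain ⟨R0, hR0⟩ := hK.isBounded.exists_norm_le
  set R : ℝ := max R0 0 with hRdef
  have hR : ∀ x ∈ K, ‖x‖ ≤ R := fun x hx => le_trans (hR0 x hx) (le_max_left _ _)
  have hRnn : 0 ≤ R := le_max_right _ _
  have hKm : MeasurableSet K := hK.isClosed.measurableSet
  have hKfin : volume K < ⊤ := hK.measure_lt_top
  -- cells are closed
  have hVclosed : ∀ j, IsClosed (voronoiCell c j) := by
    intro j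
    have hrw : voronoiCell c j
        = ⋂ u, {x : EuclideanSpace ℝ (Fin d) | ‖x - c j‖ ≤ ‖x - c u‖} := by
      ext x; simp [voronoiCell, Set.mem_iInter]
    rw [hrw]
    exact isClosed_iInter fun u => isClosed_le
      ((continuous_id.sub continuous_const).norm) ((continuous_id.sub continuous_const).norm)
  -- the perturbed squared distance function
  set f : ℝ → EuclideanSpace ℝ (Fin d) → ℝ :=
    fun h x => ⨅ j, ‖x - (c j + h • c' j)‖ ^ 2 with hfdef
  have hfW : ∀ h : ℝ, W (c + h • c') = ∫ x in K, f h x * g x := by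
    intro h; rw [hW]; rfl
  have hfW0 : W c = ∫ x in K, f 0 x * g x := by
    rw [hW]; simp only [hfdef, zero_smul, add_zero]
  -- norm expansion
  have hexp : ∀ (j : Fin k) (h : ℝ) (x : EuclideanSpace ℝ (Fin d)),
      ‖x - (c j + h • c' j)‖ ^ 2
        = ‖x - c j‖ ^ 2 - 2 * h * (inner ℝ (x - c j) (c' j) : ℝ) + h ^ 2 * ‖c' j‖ ^ 2 := by
    intro j h x
    have hv : x - (c j + h • c' j) = (x - c j) - h • c' j := by abel
    rw [hv, @norm_sub_sq_real, real_inner_smul_right, norm_smul]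
    simp [mul_pow, sq_abs]; ring
  have hf0le : ∀ (h : ℝ) x, 0 ≤ f h x := fun h x => le_ciInf fun j => sq_nonneg _
  -- measurability
  have hfmeas : ∀ h : ℝ, Measurable (f h) := fun h =>
    Measurable.iInf fun j => ((continuous_id.sub continuous_const).norm.pow 2).measurable
  -- integrability of f h * g on K
  have hfint : ∀ h : ℝ, IntegrableOn (fun x => f h x * g x) K volume := by
    intro h
    set j₀ : Fin k := Classical.arbitrary _ with hj₀def
    refine aux_integrableOn hKm hKfin ((hfmeas h).mul hg_meas)
      (C := (R + ‖c j₀‖ + |h| * ‖c' j₀‖) ^ 2 * M) ?_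
    intro x hx
    rw [abs_mul]
    have h1 : |f h x| ≤ (R + ‖c j₀‖ + |h| * ‖c' j₀‖) ^ 2 := by
      rw [abs_of_nonneg (hf0le h x)]
      refine le_trans (aux_ciInf_le _ j₀) ?_
      have h2 : ‖x - (c j₀ + h • c' j₀)‖ ≤ R + ‖c j₀‖ + |h| * ‖c' j₀‖ := by
        refine le_trans (norm_sub_le _ _) ?_
        have h3 := norm_add_le (c j₀) (h • c' j₀)
        rw [norm_smul, Real.norm_eq_abs] at h3
        have := hR x hx
        linarith
      exact pow_le_pow_left₀ (norm_nonneg _) h2 2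
    exact mul_le_mul h1 (hM x) (abs_nonneg _) (by positivity)
  -- selection of a minimal Voronoi index
  have hselex : ∀ x : EuclideanSpace ℝ (Fin d),
      (Finset.univ.filter fun j => x ∈ voronoiCell c j).Nonempty := by
    intro x
    obtain ⟨j₀, -, hj₀⟩ := Finset.exists_min_image Finset.univ (fun j => ‖x - c j‖)
      ⟨Classical.arbitrary _, Finset.mem_univ _⟩
    exact ⟨j₀, Finset.mem_filter.mpr ⟨Finset.mem_univ _, fun u => hj₀ u (Finset.mem_univ u)⟩⟩
  set sel : EuclideanSpace ℝ (Fin d) → Fin k :=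
    fun x => (Finset.univ.filter fun j => x ∈ voronoiCell c j).min' (hselex x) with hseldef
  have hselV : ∀ x, x ∈ voronoiCell c (sel x) := by
    intro x
    have := Finset.min'_mem _ (hselex x)
    exact (Finset.mem_filter.mp this).2
  have hselle : ∀ x j, x ∈ voronoiCell c j → sel x ≤ j := by
    intro x j hj
    exact Finset.min'_le (Finset.univ.filter fun u => x ∈ voronoiCell c u) j
      (Finset.mem_filter.mpr ⟨Finset.mem_univ _, hj⟩)
  -- measurability of the selection cells
  have hPmeas : ∀ j : Fin k, MeasurableSet {x | sel x = j} := by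
    intro j
    have hrw : {x | sel x = j}
        = voronoiCell c j ∩ ⋂ i, {x | x ∈ voronoiCell c i → j ≤ i} := by
      ext x
      simp only [Set.mem_setOf_eq, Set.mem_inter_iff, Set.mem_iInter]
      constructor
      · rintro rfl
        exact ⟨hselV x, fun i hi => hselle x i hi⟩
      · rintro ⟨h1, h2⟩
        exact le_antisymm (hselle x j h1) (h2 _ (hselV x))
    rw [hrw]
    refine ((hVclosed j).measurableSet).inter (MeasurableSet.iInter fun i => ?_)
    by_cases hij : j ≤ i
    · have : {x : EuclideanSpace ℝ (Fin d) | x ∈ voronoiCell c i → j ≤ i} = Set.univ := by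
        ext x; simp [hij]
      rw [this]; exact MeasurableSet.univ
    · have : {x : EuclideanSpace ℝ (Fin d) | x ∈ voronoiCell c i → j ≤ i}
          = (voronoiCell c i)ᶜ := by
        ext x; simp [hij]
      rw [this]; exact ((hVclosed i).measurableSet).compl
  -- the null set of bisectors
  set N : Set (EuclideanSpace ℝ (Fin d)) :=
    ⋃ (i : Fin k) (j : Fin k) (_ : i ≠ j), {x | ‖x - c i‖ = ‖x - c j‖} with hNdef
  have hN : volume N = 0 := by
    refine measure_iUnion_null fun i => measure_iUnion_null fun j =>
      measure_iUnion_null fun hij => ?_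
    exact aux_bisector_null (c i) (c j) (fun h => hij (hc h))
  -- the limit function
  set D : EuclideanSpace ℝ (Fin d) → ℝ :=
    fun x => -2 * (inner ℝ (x - c (sel x)) (c' (sel x)) : ℝ) with hDdef
  -- uniform Lipschitz-type bound
  set C : ℝ := ∑ j : Fin k, (2 * (R + ‖c j‖) * ‖c' j‖ + ‖c' j‖ ^ 2) with hCdef
  have hC0 : 0 ≤ C := Finset.sum_nonneg fun j _ => by positivity
  have htermC : ∀ (j : Fin k), ∀ x ∈ K, ∀ h : ℝ, |h| ≤ 1 →
      |‖x - (c j + h • c' j)‖ ^ 2 - ‖x - c j‖ ^ 2| ≤ |h| * C := by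
    intro j x hx h hh
    have hv : ‖x - c j‖ ≤ R + ‖c j‖ :=
      le_trans (norm_sub_le _ _) (by have := hR x hx; linarith)
    have hinner : |(inner ℝ (x - c j) (c' j) : ℝ)| ≤ (R + ‖c j‖) * ‖c' j‖ :=
      le_trans (abs_real_inner_le_norm _ _)
        (mul_le_mul_of_nonneg_right hv (norm_nonneg _))
    have e1 : ‖x - (c j + h • c' j)‖ ^ 2 - ‖x - c j‖ ^ 2
        = h * (-2 * (inner ℝ (x - c j) (c' j) : ℝ) + h * ‖c' j‖ ^ 2) := by
      rw [hexp]; ring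
    rw [e1, abs_mul]
    have h4 : |(-2 * (inner ℝ (x - c j) (c' j) : ℝ) + h * ‖c' j‖ ^ 2)|
        ≤ 2 * (R + ‖c j‖) * ‖c' j‖ + ‖c' j‖ ^ 2 := by
      refine le_trans (abs_add_le _ _) ?_
      have h5 : |(-2 * (inner ℝ (x - c j) (c' j) : ℝ))| ≤ 2 * ((R + ‖c j‖) * ‖c' j‖) := by
        rw [abs_mul]
        have : |(-2 : ℝ)| = 2 := by norm_num
        rw [this]
        nlinarith [hinner]
      have h6 : |h * ‖c' j‖ ^ 2| ≤ ‖c' j‖ ^ 2 := by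
        rw [abs_mul, abs_of_nonneg (sq_nonneg (‖c' j‖))]
        nlinarith [sq_nonneg (‖c' j‖)]
      linarith
    have h7 : (2 * (R + ‖c j‖) * ‖c' j‖ + ‖c' j‖ ^ 2) ≤ C := by
      refine Finset.single_le_sum (f := fun j => 2 * (R + ‖c j‖) * ‖c' j‖ + ‖c' j‖ ^ 2)
        (fun i _ => by positivity) (Finset.mem_univ j)
    exact mul_le_mul_of_nonneg_left (le_trans h4 h7) (abs_nonneg h)
  have hfdiff : ∀ h : ℝ, |h| ≤ 1 → ∀ x ∈ K, |f h x - f 0 x| ≤ |h| * C := by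
    intro h hh x hx
    have := aux_abs_iInf_sub (fun j => ‖x - (c j + (0:ℝ) • c' j)‖ ^ 2)
      (fun j => ‖x - (c j + h • c' j)‖ ^ 2) (|h| * C) ?_
    · exact this
    · intro j
      simp only [zero_smul, add_zero]
      exact htermC j x hx h hh
  -- a.e. pointwise convergence of difference quotients
  have hae : ∀ᵐ x ∂(volume.restrict K), x ∉ N :=
    ae_restrict_of_ae (ae_iff.mpr (by simpa using hN))
  have hlim : ∀ᵐ x ∂(volume.restrict K),
      Filter.Tendsto (fun h : ℝ => (f h x - f 0 x) / h * g x) (𝓝[≠] (0:ℝ))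
        (𝓝 (D x * g x)) := by
    filter_upwards [hae] with x hxN
    set j₀ := sel x with hj₀
    have hstrict : ∀ u, u ≠ j₀ → ‖x - c j₀‖ ^ 2 < ‖x - c u‖ ^ 2 := by
      intro u hu
      have hle : ‖x - c j₀‖ ≤ ‖x - c u‖ := hselV x u
      have hneq : ‖x - c j₀‖ ≠ ‖x - c u‖ := by
        intro heq
        exact hxN (Set.mem_iUnion.mpr ⟨j₀, Set.mem_iUnion.mpr ⟨u,
          Set.mem_iUnion.mpr ⟨fun hh => hu hh.symm, heq⟩⟩⟩)
      have hlt := lt_of_le_of_ne hle hneq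
      exact pow_lt_pow_left₀ hlt (norm_nonneg _) (by norm_num)
    have hev : ∀ᶠ h in 𝓝 (0:ℝ), f h x = ‖x - (c j₀ + h • c' j₀)‖ ^ 2 := by
      have hall : ∀ᶠ h in 𝓝 (0:ℝ), ∀ u,
          ‖x - (c j₀ + h • c' j₀)‖ ^ 2 ≤ ‖x - (c u + h • c' u)‖ ^ 2 := by
        rw [Filter.eventually_all]
        intro u
        rcases eq_or_ne u j₀ with rfl | hu
        · exact Filter.Eventually.of_forall fun h => le_rfl
        · have hcont : Continuous fun h : ℝ =>
              ‖x - (c u + h • c' u)‖ ^ 2 - ‖x - (c j₀ + h • c' j₀)‖ ^ 2 := by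
            apply Continuous.sub <;>
            exact ((continuous_const.sub (continuous_const.add
              (continuous_id.smul continuous_const))).norm.pow 2)
          have h0 : (0:ℝ) < ‖x - (c u + (0:ℝ) • c' u)‖ ^ 2
              - ‖x - (c j₀ + (0:ℝ) • c' j₀)‖ ^ 2 := by
            simp only [zero_smul, add_zero]
            linarith [hstrict u hu]
          have hopen := (isOpen_lt continuous_const hcont).mem_nhds h0
          filter_upwards [hopen] with h hh
          have hh' : (0:ℝ) < ‖x - (c u + h • c' u)‖ ^ 2 - ‖x - (c j₀ + h • c' j₀)‖ ^ 2 := hh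
          linarith
      filter_upwards [hall] with h hh
      exact aux_iInf_eq _ j₀ hh
    have hf0x : f 0 x = ‖x - c j₀‖ ^ 2 := by
      have : ∀ u, ‖x - (c j₀ + (0:ℝ) • c' j₀)‖ ^ 2 ≤ ‖x - (c u + (0:ℝ) • c' u)‖ ^ 2 := by
        intro u; simp only [zero_smul, add_zero]
        have := hselV x u
        exact pow_le_pow_left₀ (norm_nonneg _) this 2
      have h9 := aux_iInf_eq (fun u => ‖x - (c u + (0:ℝ) • c' u)‖ ^ 2) j₀ this
      have hfx : f 0 x = ⨅ u, ‖x - (c u + (0:ℝ) • c' u)‖ ^ 2 := rfl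
      rw [hfx, h9]
      simp
    have hquot : ∀ᶠ h in 𝓝[≠] (0:ℝ),
        (-2 * (inner ℝ (x - c j₀) (c' j₀) : ℝ) + h * ‖c' j₀‖ ^ 2) * g x
          = (f h x - f 0 x) / h * g x := by
      filter_upwards [nhdsWithin_le_nhds hev, self_mem_nhdsWithin] with h hh hh0
      have hh0' : h ≠ 0 := hh0
      rw [hh, hf0x, hexp]
      have e2 : ‖x - c j₀‖ ^ 2 - 2 * h * (inner ℝ (x - c j₀) (c' j₀) : ℝ)
          + h ^ 2 * ‖c' j₀‖ ^ 2 - ‖x - c j₀‖ ^ 2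
          = h * (-2 * (inner ℝ (x - c j₀) (c' j₀) : ℝ) + h * ‖c' j₀‖ ^ 2) := by ring
      rw [e2, mul_div_cancel_left₀ _ hh0']
    refine Filter.Tendsto.congr' hquot ?_
    have hcont2 : Filter.Tendsto (fun h : ℝ =>
        (-2 * (inner ℝ (x - c j₀) (c' j₀) : ℝ) + h * ‖c' j₀‖ ^ 2) * g x) (𝓝 0)
        (𝓝 ((-2 * (inner ℝ (x - c j₀) (c' j₀) : ℝ) + 0 * ‖c' j₀‖ ^ 2) * g x)) := by
      exact (Continuous.mul (continuous_const.add (continuous_id.mul continuous_const))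
        continuous_const).tendsto 0
    have : D x * g x = (-2 * (inner ℝ (x - c j₀) (c' j₀) : ℝ) + 0 * ‖c' j₀‖ ^ 2) * g x := by
      rw [hDdef]; simp [← hj₀]
    rw [this]
    exact hcont2.mono_left nhdsWithin_le_nhds
  -- dominated convergence
  have hFmeas : ∀ᶠ h in 𝓝[≠] (0:ℝ), AEStronglyMeasurable
      (fun x => (f h x - f 0 x) / h * g x) (volume.restrict K) :=
    Filter.Eventually.of_forall fun h =>
      ((((hfmeas h).sub (hfmeas 0)).div_const h).mul hg_meas).aestronglyMeasurable
  have hbound : ∀ᶠ h in 𝓝[≠] (0:ℝ), ∀ᵐ x ∂(volume.restrict K),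
      ‖(f h x - f 0 x) / h * g x‖ ≤ C * M := by
    have h1 : ∀ᶠ h in 𝓝 (0:ℝ), |h| ≤ 1 := by
      filter_upwards [Metric.ball_mem_nhds (0:ℝ) one_pos] with h hh
      rw [Metric.mem_ball, Real.dist_eq, sub_zero] at hh
      linarith
    filter_upwards [nhdsWithin_le_nhds h1, self_mem_nhdsWithin] with h hh1 hh0
    have hh0' : h ≠ 0 := hh0
    filter_upwards [ae_restrict_mem hKm] with x hx
    rw [Real.norm_eq_abs, abs_mul, abs_div]
    have h2 : |f h x - f 0 x| / |h| ≤ C := by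
      rw [div_le_iff₀ (abs_pos.mpr hh0')]
      calc |f h x - f 0 x| ≤ |h| * C := hfdiff h hh1 x hx
        _ = C * |h| := mul_comm _ _
    exact mul_le_mul h2 (hM x) (abs_nonneg _) hC0
  have hboundint : Integrable (fun _ => C * M) (volume.restrict K) :=
    integrableOn_const hKfin.ne
  have hDCT := tendsto_integral_filter_of_dominated_convergence (μ := volume.restrict K)
    (F := fun (h : ℝ) x => (f h x - f 0 x) / h * g x) (f := fun x => D x * g x)
    (bound := fun _ => C * M) hFmeas hbound hboundint hlim
  -- rewrite the difference quotient of W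
  have hWq : ∀ᶠ h in 𝓝[≠] (0:ℝ),
      (∫ x in K, (f h x - f 0 x) / h * g x) = (W (c + h • c') - W c) / h := by
    filter_upwards [self_mem_nhdsWithin] with h hh0
    have e3 : (fun x => (f h x - f 0 x) / h * g x)
        = fun x => (f h x * g x - f 0 x * g x) * h⁻¹ := by
      funext x; rw [div_eq_mul_inv]; ring
    rw [e3, integral_mul_const, integral_sub (hfint h) (hfint 0), hfW h, hfW0,
      div_eq_mul_inv]
  -- the limit integral vanishes by the first-order conditions
  have hcell : ∀ j : Fin k,
      (∫ x in voronoiCell c j ∩ K, -2 * (inner ℝ (x - c j) (c' j) : ℝ) * g x) = 0 := by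
    intro j
    have hSm : MeasurableSet (voronoiCell c j ∩ K) :=
      ((hVclosed j).measurableSet).inter hKm
    have hSfin : volume (voronoiCell c j ∩ K) < ⊤ :=
      lt_of_le_of_lt (measure_mono Set.inter_subset_right) hKfin
    have hproj : ∀ ℓ : Fin d, Measurable fun x : EuclideanSpace ℝ (Fin d) => x ℓ := by
      intro ℓ
      exact (EuclideanSpace.proj (𝕜 := ℝ) ℓ).continuous.measurable
    have habs : ∀ (ℓ : Fin d) (x : EuclideanSpace ℝ (Fin d)), |x ℓ| ≤ ‖x‖ := by
      intro ℓ x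
      rw [EuclideanSpace.norm_eq x, ← Real.sqrt_sq_eq_abs]
      apply Real.sqrt_le_sqrt
      have : x ℓ ^ 2 = ‖x ℓ‖ ^ 2 := by rw [Real.norm_eq_abs, sq_abs]
      rw [this]
      exact Finset.single_le_sum (f := fun i => ‖x i‖ ^ 2)
        (fun i _ => sq_nonneg _) (Finset.mem_univ ℓ)
    have hintg : IntegrableOn g (voronoiCell c j ∩ K) volume :=
      aux_integrableOn hSm hSfin hg_meas (C := M) fun x _ => hM x
    have hintxg : ∀ ℓ : Fin d,
        IntegrableOn (fun x => x ℓ * g x) (voronoiCell c j ∩ K) volume := by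
      intro ℓ
      refine aux_integrableOn hSm hSfin ((hproj ℓ).mul hg_meas) (C := R * M) ?_
      intro x hx
      rw [abs_mul]
      exact mul_le_mul (le_trans (habs ℓ x) (hR x hx.2)) (hM x) (abs_nonneg _) hRnn
    have expand : ∀ x : EuclideanSpace ℝ (Fin d),
        -2 * (inner ℝ (x - c j) (c' j) : ℝ) * g x
          = ∑ ℓ : Fin d, (-2 * c' j ℓ) * (x ℓ * g x - c j ℓ * g x) := by
      intro x
      have hi : (inner ℝ (x - c j) (c' j) : ℝ) = ∑ ℓ, (x ℓ - c j ℓ) * c' j ℓ := by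
        rw [PiLp.inner_apply]
        simp [RCLike.inner_apply]
        exact Finset.sum_congr rfl fun i _ => mul_comm _ _
      rw [hi, Finset.mul_sum, Finset.sum_mul]
      refine Finset.sum_congr rfl fun ℓ _ => ?_
      ring
    have hint2 : ∀ ℓ : Fin d, IntegrableOn
        (fun x => (-2 * c' j ℓ) * (x ℓ * g x - c j ℓ * g x)) (voronoiCell c j ∩ K) volume := by
      intro ℓ
      exact (((hintxg ℓ).sub (hintg.const_mul _)).const_mul _)
    calc (∫ x in voronoiCell c j ∩ K, -2 * (inner ℝ (x - c j) (c' j) : ℝ) * g x)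
        = ∫ x in voronoiCell c j ∩ K,
            ∑ ℓ : Fin d, (-2 * c' j ℓ) * (x ℓ * g x - c j ℓ * g x) := by
          simp only [expand]
      _ = ∑ ℓ : Fin d, ∫ x in voronoiCell c j ∩ K,
            (-2 * c' j ℓ) * (x ℓ * g x - c j ℓ * g x) :=
          integral_finset_sum _ fun ℓ _ => hint2 ℓ
      _ = 0 := by
          refine Finset.sum_eq_zero fun ℓ _ => ?_
          rw [integral_const_mul, integral_sub (hintxg ℓ) (hintg.const_mul _),
            integral_const_mul, ← hfoc j ℓ]
          ring
  -- decompose the limit integral over the selection cells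
  have hVP : ∀ j, voronoiCell c j \ {x | sel x = j} ⊆ N := by
    intro j x hx
    obtain ⟨hxV, hxP⟩ := hx
    have h1 : ‖x - c (sel x)‖ ≤ ‖x - c j‖ := hselV x j
    have h2 : ‖x - c j‖ ≤ ‖x - c (sel x)‖ := hxV (sel x)
    have hne2 : sel x ≠ j := hxP
    exact Set.mem_iUnion.mpr ⟨sel x, Set.mem_iUnion.mpr ⟨j,
      Set.mem_iUnion.mpr ⟨hne2, le_antisymm h1 h2⟩⟩⟩
  have hPV : ∀ j, {x | sel x = j} ⊆ voronoiCell c j := by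
    intro j x hx
    have : sel x = j := hx
    rw [← this]; exact hselV x
  have hDsum : ∀ x : EuclideanSpace ℝ (Fin d), D x * g x
      = ∑ j : Fin k, ({y | sel y = j}).indicator
          (fun y => -2 * (inner ℝ (y - c j) (c' j) : ℝ) * g y) x := by
    intro x
    simp only [Set.indicator_apply, Set.mem_setOf_eq, Finset.sum_ite_eq, Finset.mem_univ,
      if_true, hDdef]
  have hL : (∫ x in K, D x * g x) = 0 := by
    calc (∫ x in K, D x * g x)
        = ∫ x in K, ∑ j : Fin k, ({y | sel y = j}).indicator
            (fun y => -2 * (inner ℝ (y - c j) (c' j) : ℝ) * g y) x := by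
          simp only [hDsum]
      _ = ∑ j : Fin k, ∫ x in K, ({y | sel y = j}).indicator
            (fun y => -2 * (inner ℝ (y - c j) (c' j) : ℝ) * g y) x := by
          refine integral_finset_sum _ fun j _ => ?_
          refine Integrable.indicator ?_ (hPmeas j)
          refine aux_integrableOn hKm hKfin ?_ (C := 2 * (R + ‖c j‖) * ‖c' j‖ * M) ?_
          · exact ((continuous_const.mul ((continuous_id.sub continuous_const).inner
              continuous_const)).measurable).mul hg_meas
          · intro x hx
            rw [abs_mul, abs_mul]
            have h5 : |(-2 : ℝ)| = 2 := by norm_num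
            rw [h5]
            have hinner : |(inner ℝ (x - c j) (c' j) : ℝ)| ≤ (R + ‖c j‖) * ‖c' j‖ := by
              refine le_trans (abs_real_inner_le_norm _ _) ?_
              refine mul_le_mul_of_nonneg_right ?_ (norm_nonneg _)
              refine le_trans (norm_sub_le _ _) ?_
              have := hR x hx
              linarith
            calc 2 * |(inner ℝ (x - c j) (c' j) : ℝ)| * |g x|
                ≤ 2 * ((R + ‖c j‖) * ‖c' j‖) * M := by
                  refine mul_le_mul (mul_le_mul_of_nonneg_left hinner (by norm_num))
                    (hM x) (abs_nonneg _) (by positivity)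
              _ = 2 * (R + ‖c j‖) * ‖c' j‖ * M := by ring
      _ = ∑ j : Fin k, ∫ x in K ∩ {y | sel y = j},
            -2 * (inner ℝ (x - c j) (c' j) : ℝ) * g x := by
          refine Finset.sum_congr rfl fun j _ => ?_
          exact setIntegral_indicator (hPmeas j)
      _ = ∑ j : Fin k, ∫ x in voronoiCell c j ∩ K,
            -2 * (inner ℝ (x - c j) (c' j) : ℝ) * g x := by
          refine Finset.sum_congr rfl fun j _ => ?_
          refine setIntegral_congr_set ?_
          have hd1 : volume ((K ∩ {y | sel y = j}) \ (voronoiCell c j ∩ K)) = 0 := by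
            refine measure_mono_null ?_ hN
            intro x hx
            obtain ⟨⟨hxK, hxP⟩, hxn⟩ := hx
            exact absurd ⟨hPV j hxP, hxK⟩ hxn
          have hd2 : volume ((voronoiCell c j ∩ K) \ (K ∩ {y | sel y = j})) = 0 := by
            refine measure_mono_null ?_ hN
            intro x hx
            obtain ⟨⟨hxV, hxK⟩, hxn⟩ := hx
            refine hVP j ⟨hxV, ?_⟩
            intro hsel
            exact hxn ⟨hxK, hsel⟩
          rw [MeasureTheory.ae_eq_set]
          exact ⟨hd1, hd2⟩
      _ = 0 := Finset.sum_eq_zero fun j _ => hcell j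
  rw [hL] at hDCT
  exact Filter.Tendsto.congr' hWq hDCT
end

section
/- Let d, k ≥ 1, let K ⊆ ℝ^d be compact, and let g : ℝ^d → ℝ be integrable on K. Then the map c ↦ W_g(c) = ∫_K min_{j=1,…,k} ‖x − c_j‖² g(x) dx is continuous on (ℝ^d)^k, and is Lipschitz on every bounded subset of (ℝ^d)^k. -/
open MeasureTheory

lemma aux_abs_ciInf_sub_ciInf_le {ι : Type*} [Nonempty ι] [Finite ι]
    (f h : ι → ℝ) (B : ℝ) (hB : ∀ i, |f i - h i| ≤ B) :
    |(⨅ i, f i) - ⨅ i, h i| ≤ B := by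
  obtain ⟨i, hi⟩ := exists_eq_ciInf_of_finite (f := f)
  obtain ⟨j, hj⟩ := exists_eq_ciInf_of_finite (f := h)
  have h1 : (⨅ i, f i) ≤ f j := ciInf_le (Finite.bddBelow_range f) j
  have h2 : (⨅ i, h i) ≤ h i := ciInf_le (Finite.bddBelow_range h) i
  rw [abs_sub_le_iff]
  constructor
  · have := abs_le.1 (hB j)
    linarith
  · have := abs_le.1 (hB i)
    linarith

lemma aux_sq_norm_diff {E : Type*} [NormedAddCommGroup E] (x a b : E) :
    |‖x - a‖ ^ 2 - ‖x - b‖ ^ 2| ≤ (‖x - a‖ + ‖x - b‖) * ‖a - b‖ := by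
  have h1 : ‖x - a‖ ^ 2 - ‖x - b‖ ^ 2 = (‖x - a‖ + ‖x - b‖) * (‖x - a‖ - ‖x - b‖) := by ring
  rw [h1, abs_mul, abs_of_nonneg (by positivity)]
  gcongr
  calc |‖x - a‖ - ‖x - b‖| ≤ ‖(x - a) - (x - b)‖ := abs_norm_sub_norm_le _ _
    _ = ‖b - a‖ := by rw [show (x - a) - (x - b) = b - a by abel]
    _ = ‖a - b‖ := norm_sub_rev _ _

/-- For `g` integrable on a compact `K ⊆ ℝ^d`, the weighted distortion
`c ↦ W_g(c) = ∫_K min_j ‖x − c_j‖² g(x) dx` is continuous on `(ℝ^d)^k` and Lipschitz on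
every bounded subset of `(ℝ^d)^k`. -/
theorem distortion_continuous_and_locally_lipschitz
    (d k : ℕ) (hd : 1 ≤ d) (hk : 1 ≤ k)
    (K : Set (EuclideanSpace ℝ (Fin d))) (hK : IsCompact K)
    (g : EuclideanSpace ℝ (Fin d) → ℝ) (hg : IntegrableOn g K)
    (W : (Fin k → EuclideanSpace ℝ (Fin d)) → ℝ)
    (hW : W = fun c => ∫ x in K, (⨅ j : Fin k, ‖x - c j‖ ^ 2) * g x) :
    Continuous W ∧
    ∀ s : Set (Fin k → EuclideanSpace ℝ (Fin d)), Bornology.IsBounded s →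
      ∃ L : NNReal, LipschitzOnWith L W s := by
  have hne : Nonempty (Fin k) := ⟨⟨0, hk⟩⟩
  set F : (Fin k → EuclideanSpace ℝ (Fin d)) → EuclideanSpace ℝ (Fin d) → ℝ := fun c x => ⨅ j : Fin k, ‖x - c j‖ ^ 2 with hF
  -- R bounds K
  obtain ⟨R, hR0, hR⟩ : ∃ R : ℝ, 0 ≤ R ∧ ∀ x ∈ K, ‖x‖ ≤ R := by
    obtain ⟨R, hR⟩ := hK.isBounded.exists_norm_le
    exact ⟨max R 0, le_max_right _ _, fun x hx => (hR x hx).trans (le_max_left _ _)⟩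
  -- nonnegativity of F
  have hF_nonneg : ∀ c x, 0 ≤ F c x := fun c x =>
    le_ciInf fun j => by positivity
  -- continuity of F c in x
  have hF_cont : ∀ c, Continuous (F c) := by
    intro c
    have : F c = fun x => Finset.univ.inf' Finset.univ_nonempty
        (fun j : Fin k => ‖x - c j‖ ^ 2) := by
      funext x
      rw [Finset.inf'_univ_eq_ciInf]
    rw [this]
    exact Continuous.finset_inf'_apply _ fun i _ => by fun_prop
  -- integrability of x ↦ F c x * g x on K
  have h_int : ∀ c, IntegrableOn (fun x => F c x * g x) K := by
    intro c
    apply hg.bdd_mul (c := (R + ‖c ⟨0, hk⟩‖) ^ 2) ((hF_cont c).aestronglyMeasurable)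
    filter_upwards [ae_restrict_mem hK.isClosed.measurableSet] with x hx
    rw [Real.norm_eq_abs, abs_of_nonneg (hF_nonneg c x)]
    calc F c x ≤ ‖x - c ⟨0, hk⟩‖ ^ 2 := ciInf_le (Finite.bddBelow_range _) _
      _ ≤ (R + ‖c ⟨0, hk⟩‖) ^ 2 := by
          have hle : ‖x - c ⟨0, hk⟩‖ ≤ R + ‖c ⟨0, hk⟩‖ :=
            (norm_sub_le _ _).trans (by gcongr; exact hR x hx)
          exact pow_le_pow_left₀ (norm_nonneg _) hle 2
  -- key pointwise estimate
  have hkey : ∀ (M : ℝ) (c c' : Fin k → EuclideanSpace ℝ (Fin d)), (∀ j, ‖c j‖ ≤ M) → (∀ j, ‖c' j‖ ≤ M) →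
      ∀ x ∈ K, |F c x - F c' x| ≤ (2 * R + 2 * M) * dist c c' := by
    intro M c c' hc hc' x hx
    apply aux_abs_ciInf_sub_ciInf_le
    intro j
    calc |‖x - c j‖ ^ 2 - ‖x - c' j‖ ^ 2|
        ≤ (‖x - c j‖ + ‖x - c' j‖) * ‖c j - c' j‖ := aux_sq_norm_diff x _ _
      _ ≤ (2 * R + 2 * M) * dist c c' := by
          have h0M : (0:ℝ) ≤ M := (norm_nonneg _).trans (hc ⟨0, hk⟩)
          have hxj : ‖x - c j‖ ≤ R + M :=
            (norm_sub_le _ _).trans (add_le_add (hR x hx) (hc j))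
          have hxj' : ‖x - c' j‖ ≤ R + M :=
            (norm_sub_le _ _).trans (add_le_add (hR x hx) (hc' j))
          have hdj : ‖c j - c' j‖ ≤ dist c c' := by
            rw [← dist_eq_norm]; exact dist_le_pi_dist c c' j
          calc (‖x - c j‖ + ‖x - c' j‖) * ‖c j - c' j‖
              ≤ ((R + M) + (R + M)) * dist c c' := by
                apply mul_le_mul (add_le_add hxj hxj') hdj (norm_nonneg _)
                positivity
            _ = (2 * R + 2 * M) * dist c c' := by ring
  -- the Lipschitz bound on bounded sets
  have hLip : ∀ s : Set (Fin k → EuclideanSpace ℝ (Fin d)), Bornology.IsBounded s →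
      ∃ L : NNReal, LipschitzOnWith L W s := by
    intro s hs
    obtain ⟨M, hM0, hM⟩ : ∃ M : ℝ, 0 ≤ M ∧ ∀ c ∈ s, ‖c‖ ≤ M := by
      obtain ⟨M, hM⟩ := hs.exists_norm_le
      exact ⟨max M 0, le_max_right _ _, fun c hc => (hM c hc).trans (le_max_left _ _)⟩
    set Lr : ℝ := (2 * R + 2 * M) * ∫ x in K, |g x| with hLr
    have hLr0 : 0 ≤ Lr := by
      have : 0 ≤ ∫ x in K, |g x| := integral_nonneg fun x => abs_nonneg _
      positivity
    refine ⟨Lr.toNNReal, LipschitzOnWith.of_dist_le_mul fun c hc c' hc' => ?_⟩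
    have hcj : ∀ j, ‖c j‖ ≤ M := fun j => (norm_le_pi_norm c j).trans (hM c hc)
    have hcj' : ∀ j, ‖c' j‖ ≤ M := fun j => (norm_le_pi_norm c' j).trans (hM c' hc')
    rw [Real.coe_toNNReal _ hLr0, hW]
    simp only [← hF]
    rw [dist_eq_norm, ← integral_sub (h_int c) (h_int c')]
    have hglip : Integrable (fun x => ((2 * R + 2 * M) * dist c c') * |g x|)
        (volume.restrict K) := (hg.abs.const_mul _)
    calc ‖∫ x in K, (F c x * g x - F c' x * g x)‖
        ≤ ∫ x in K, ((2 * R + 2 * M) * dist c c') * |g x| := by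
          apply norm_integral_le_of_norm_le hglip
          filter_upwards [ae_restrict_mem hK.isClosed.measurableSet] with x hx
          rw [show F c x * g x - F c' x * g x = (F c x - F c' x) * g x by ring,
            Real.norm_eq_abs, abs_mul]
          exact mul_le_mul_of_nonneg_right (hkey M c c' hcj hcj' x hx) (abs_nonneg _)
      _ = Lr * dist c c' := by
          rw [integral_const_mul, hLr]; ring
  refine ⟨?_, hLip⟩
  rw [continuous_iff_continuousAt]
  intro c
  obtain ⟨L, hL⟩ := hLip (Metric.closedBall c 1) Metric.isBounded_closedBall
  exact (hL.continuousOn).continuousAt (Metric.closedBall_mem_nhds c one_pos)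
end
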